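/- Let S be a Cu-semigroup satisfying (O5) that is almost divisible. Then the following are equivalent: (i) S is almost unperforated; (ii) for every scale Σ on S, the pair (S,Σ) has locally bounded comparison amplitude (LBCA); (iii) there exists a scale Σ on S such that (S,Σ) has LBCA. -/

import Mathlib

set_option linter.unusedSectionVars false
set_option linter.unusedVariables false
set_option maxHeartbeats 1000000


open scoped ENNReal

section CuPreamble

variable {S : Type*} [AddCommMonoid S] [PartialOrder S]

/-- The way-below (compact containment) relation: `x ≪ y` if for every increasing
sequence with a supremum above `y`, some term dominates `x`. -/
def WayBelow (x y : S) : Prop :=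
  ∀ (f : ℕ → S) (s : S), Monotone f → IsLUB (Set.range f) s → y ≤ s → ∃ n, x ≤ f n

/-- A Cu-semigroup: a positively ordered commutative monoid satisfying (O1)-(O4). -/
structure IsCuSemigroup (S : Type*) [AddCommMonoid S] [PartialOrder S] : Prop where
  zero_le : ∀ x : S, 0 ≤ x
  add_le_add : ∀ ⦃a b c d : S⦄, a ≤ b → c ≤ d → a + c ≤ b + d
  O1 : ∀ f : ℕ → S, Monotone f → ∃ s : S, IsLUB (Set.range f) s
  O2 : ∀ x : S, ∃ f : ℕ → S, (∀ n, WayBelow (f n) (f (n + 1))) ∧ IsLUB (Set.range f) x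
  O3 : ∀ ⦃x₁ x₂ y₁ y₂ : S⦄, WayBelow x₁ x₂ → WayBelow y₁ y₂ → WayBelow (x₁ + y₁) (x₂ + y₂)
  O4 : ∀ (f g : ℕ → S) (s t : S), Monotone f → Monotone g → IsLUB (Set.range f) s →
    IsLUB (Set.range g) t → IsLUB (Set.range fun n => f n + g n) (s + t)

/-- The axiom (O5), including the strengthened form. -/
def SatisfiesO5 (S : Type*) [AddCommMonoid S] [PartialOrder S] : Prop :=
  (∀ x' x y : S, WayBelow x' x → x ≤ y → ∃ z : S, x' + z ≤ y ∧ y ≤ x + z) ∧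
  (∀ x' x y w' w : S, WayBelow x' x → x + w ≤ y → WayBelow w' w →
    ∃ z : S, WayBelow w' z ∧ x' + z ≤ y ∧ y ≤ x + z)

/-- The axiom (O6). -/
def SatisfiesO6 (S : Type*) [AddCommMonoid S] [PartialOrder S] : Prop :=
  ∀ x' x y z : S, WayBelow x' x → x ≤ y + z →
    ∃ y' z' : S, x' ≤ y' + z' ∧ y' ≤ y ∧ y' ≤ x ∧ z' ≤ z ∧ z' ≤ x

/-- A functional on a Cu-semigroup: a map to `[0,∞]` preserving order, addition, zero,
and suprema of increasing sequences. -/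
structure IsFunctional (l : S → ℝ≥0∞) : Prop where
  mono : Monotone l
  map_zero : l 0 = 0
  map_add : ∀ x y : S, l (x + y) = l x + l y
  map_sup : ∀ (f : ℕ → S) (s : S), Monotone f → IsLUB (Set.range f) s → l s = ⨆ n, l (f n)

/-- Edwards' condition. -/
def EdwardsCondition (S : Type*) [AddCommMonoid S] [PartialOrder S] : Prop :=
  ∀ l : S → ℝ≥0∞, IsFunctional l → ∀ x y : S,
    sInf {r : ℝ≥0∞ | ∃ l₁ l₂ : S → ℝ≥0∞, IsFunctional l₁ ∧ IsFunctional l₂ ∧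
        (∀ s : S, l₁ s + l₂ s = l s) ∧ r = l₁ x + l₂ y} =
    sSup {r : ℝ≥0∞ | ∃ z : S, z ≤ x ∧ z ≤ y ∧ r = l z}

/-- A scale on a Cu-semigroup. -/
structure IsScale (Sg : Set S) : Prop where
  hered : ∀ ⦃x y : S⦄, y ≤ x → x ∈ Sg → y ∈ Sg
  supClosed : ∀ (f : ℕ → S) (s : S), Monotone f → (∀ n, f n ∈ Sg) →
    IsLUB (Set.range f) s → s ∈ Sg
  generates : ∀ x' x : S, WayBelow x' x → ∃ L : List S, (∀ z ∈ L, z ∈ Sg) ∧ x' ≤ L.sum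

/-- The `d`-fold amplification `Σ^{(d)}` of a scale. -/
def scaleAmp (Sg : Set S) : ℕ → Set S
  | 0 => {0}
  | d + 1 => {x : S | ∀ x' : S, WayBelow x' x →
      ∃ f : Fin (d + 1) → S, (∀ i, f i ∈ Sg) ∧ WayBelow x' (∑ i, f i)}

end CuPreamble

/-- Locally bounded comparison amplitude (LBCA) of a scaled Cu-semigroup. -/
def HasLBCA {S : Type*} [AddCommMonoid S] [PartialOrder S] (Sg : Set S) : Prop :=
  ∀ γ : ℝ≥0∞, 0 < γ → γ < 1 → ∀ d : ℕ, ∃ N : ℕ, ∀ x y : S,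
    x ∈ scaleAmp Sg d → y ∈ scaleAmp Sg d →
    (∀ l : S → ℝ≥0∞, IsFunctional l → l x ≤ γ * l y) →
    ∀ n : ℕ, N ≤ n → n • x ≤ n • y

section BasicLemmas

variable {S : Type*} [AddCommMonoid S] [PartialOrder S]

/-- way-below implies ≤ -/
theorem WayBelow.le {x y : S} (h : WayBelow x y) : x ≤ y := by
  obtain ⟨n, hn⟩ := h (fun _ => y) y monotone_const
    ⟨by rintro _ ⟨n, rfl⟩; exact le_rfl, fun b hb => hb ⟨0, rfl⟩⟩ le_rfl
  exact hn

theorem WayBelow.trans_le {x y z : S} (h : WayBelow x y) (h' : y ≤ z) : WayBelow x z :=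
  fun f s hf hs hle => h f s hf hs (h'.trans hle)

theorem le_wayBelow {x y z : S} (h : x ≤ y) (h' : WayBelow y z) : WayBelow x z :=
  fun f s hf hs hle => (h' f s hf hs hle).imp fun _ hn => h.trans hn

variable (hCu : IsCuSemigroup S)
include hCu

theorem le_add_right' (a b : S) : a ≤ a + b := by
  simpa using hCu.add_le_add (le_refl a) (hCu.zero_le b)

theorem le_add_left' (a b : S) : a ≤ b + a := by
  simpa [add_comm] using le_add_right' hCu a b

theorem nsmul_le_nsmul_base {a b : S} (h : a ≤ b) (k : ℕ) : k • a ≤ k • b := by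
  induction k with
  | zero => simp
  | succ n ih => rw [succ_nsmul, succ_nsmul]; exact hCu.add_le_add ih h

theorem nsmul_le_nsmul_scalar {a : S} {k k' : ℕ} (h : k ≤ k') : k • a ≤ k' • a := by
  obtain ⟨m, rfl⟩ := Nat.exists_eq_add_of_le h
  rw [add_nsmul]; exact le_add_right' hCu _ _

theorem wayBelow_zero (z : S) : WayBelow (0:S) z :=
  fun f _ _ _ _ => ⟨0, hCu.zero_le _⟩

theorem WayBelow.nsmul {x y : S} (h : WayBelow x y) (k : ℕ) : WayBelow (k • x) (k • y) := by
  induction k with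
  | zero => simpa using wayBelow_zero hCu (0:S)
  | succ n ih => rw [succ_nsmul, succ_nsmul]; exact hCu.O3 ih h

omit hCu in
theorem nsmul_left (a : S) (m n : ℕ) : (m*n) • a = m • (n • a) := by
  rw [mul_comm]; exact mul_nsmul a n m

omit hCu in
theorem nsmul_right (a : S) (m n : ℕ) : (m*n) • a = n • (m • a) := mul_nsmul a m n

omit hCu in
/-- chain from O2 is monotone -/
theorem chain_monotone {f : ℕ → S} (h : ∀ n, WayBelow (f n) (f (n+1))) : Monotone f :=
  monotone_nat_of_le_succ fun n => (h n).le

theorem IsLUB.nsmul_range {f : ℕ → S} {s : S} (hmono : Monotone f)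
    (h : IsLUB (Set.range f) s) (k : ℕ) : IsLUB (Set.range fun n => k • f n) (k • s) := by
  induction k with
  | zero =>
    simp only [zero_nsmul]
    constructor
    · rintro _ ⟨n, rfl⟩; exact le_rfl
    · intro b hb; exact hb ⟨0, rfl⟩
  | succ n ih =>
    have h4 := hCu.O4 f (fun m => n • f m) s (n • s) hmono
      (fun i j hij => nsmul_le_nsmul_base hCu (hmono hij) n) h ih
    have he : (fun m => (n+1) • f m) = fun m => f m + (fun m => n • f m) m := by
      funext m; rw [succ_nsmul, add_comm]
    have he2 : (n+1) • s = s + n • s := by rw [succ_nsmul, add_comm]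
    rw [he, he2]; exact h4

/-- capture lemma: if u ≪ v ≤ k • w then u ≤ k • w1 for some w1 ≪ w -/
theorem capture {u v w : S} (k : ℕ) (hu : WayBelow u v) (hv : v ≤ k • w) :
    ∃ w1 : S, WayBelow w1 w ∧ u ≤ k • w1 := by
  obtain ⟨f, hf, hlub⟩ := hCu.O2 w
  have hmono := chain_monotone hf
  obtain ⟨n, hn⟩ := hu (fun m => k • f m) (k • w)
    (fun i j hij => nsmul_le_nsmul_base hCu (hmono hij) k)
    (IsLUB.nsmul_range hCu hmono hlub k) hv
  exact ⟨f n, (hf n).trans_le (hlub.1 ⟨n + 1, rfl⟩), hn⟩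

/-- interpolation -/
theorem wayBelow_interpolate {w s : S} (h : WayBelow w s) :
    ∃ u : S, WayBelow w u ∧ WayBelow u s := by
  obtain ⟨f, hf, hlub⟩ := hCu.O2 s
  obtain ⟨n, hn⟩ := h f s (chain_monotone hf) hlub le_rfl
  exact ⟨f (n+1), le_wayBelow hn (hf n), (hf (n+1)).trans_le (hlub.1 ⟨n + 2, rfl⟩)⟩

omit hCu in
/-- functional on nsmul -/
theorem IsFunctional.map_nsmul {l : S → ℝ≥0∞} (hl : IsFunctional l) (k : ℕ) (a : S) :
    l (k • a) = k * l a := by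
  induction k with
  | zero => simpa using hl.map_zero
  | succ n ih =>
    rw [succ_nsmul, hl.map_add, ih, Nat.cast_succ, add_mul, one_mul]

end BasicLemmas


section ScaleLemmas

variable {S : Type*} [AddCommMonoid S] [PartialOrder S] (hCu : IsCuSemigroup S)

theorem list_sum_fin (L : List S) : ∀ d : ℕ, L.length ≤ d → (∑ i : Fin d, L.getD i 0) = L.sum := by
  induction L with
  | nil => intro d _; simp
  | cons a L ih =>
    intro d hd
    match d with
    | 0 => simp at hd
    | d + 1 =>
      rw [Fin.sum_univ_succ]
      simp only [Fin.val_zero, Fin.val_succ, List.getD_cons_zero, List.getD_cons_succ,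
        List.sum_cons]
      rw [ih d (by simpa using hd)]

theorem zero_mem_scale {Sg : Set S} (hSg : IsScale Sg) (h : Sg.Nonempty) (hCu : IsCuSemigroup S) :
    (0:S) ∈ Sg := by
  obtain ⟨a, ha⟩ := h
  exact hSg.hered (hCu.zero_le a) ha

include hCu

theorem mem_scaleAmp_of_le {Sg : Set S} (hSg : IsScale Sg) (h0 : (0:S) ∈ Sg)
    {z Z : S} (hz : WayBelow z Z) :
    ∃ d₀ : ℕ, ∀ d, d₀ ≤ d → ∀ u, u ≤ z → u ∈ scaleAmp Sg (d+1) := by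
  obtain ⟨L, hLmem, hLsum⟩ := hSg.generates z Z hz
  refine ⟨L.length, fun d hd u hu => ?_⟩
  intro w hw
  refine ⟨fun i => L.getD i 0, fun i => ?_, ?_⟩
  · show L.getD i 0 ∈ Sg
    rcases lt_or_ge (i:ℕ) L.length with h | h
    · rw [List.getD_eq_getElem _ _ h]; exact hLmem _ (L.getElem_mem h)
    · rw [List.getD_eq_default _ _ h]; exact h0
  · rw [list_sum_fin L (d+1) (hd.trans (Nat.le_succ d))]
    exact hw.trans_le (hu.trans hLsum)

theorem partC (hdiv : ∀ x' x : S, WayBelow x' x → ∀ n : ℕ, ∃ y : S, n • y ≤ x ∧ x' ≤ (n + 1) • y)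
    {Sg : Set S} (hSg : IsScale Sg) (hL : HasLBCA Sg) :
    ∀ x y : S, (∃ n : ℕ, (n + 1) • x ≤ n • y) → x ≤ y := by
  rintro x y ⟨n, hn⟩
  rcases Nat.eq_zero_or_pos n with rfl | hn1
  · simp only [zero_add, one_smul, zero_smul] at hn
    exact hn.trans (hCu.zero_le y)
  obtain ⟨fx, hfx, hlubx⟩ := hCu.O2 x
  refine hlubx.2 ?_
  rintro _ ⟨k, rfl⟩
  by_cases hSgne : Sg.Nonempty
  case neg =>
    obtain ⟨L, hLmem, hLsum⟩ := hSg.generates (fx k) (fx (k+1)) (hfx k)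
    have hLnil : L = [] := by
      rcases L with _ | ⟨a, L⟩
      · rfl
      · exact absurd ⟨a, hLmem a List.mem_cons_self⟩ hSgne
    subst hLnil
    simp only [List.sum_nil] at hLsum
    exact hLsum.trans (hCu.zero_le y)
  have h0 : (0:S) ∈ Sg := zero_mem_scale hSg hSgne hCu
  -- localize inside y
  obtain ⟨gy, hgy, hluby⟩ := hCu.O2 y
  have hwb : WayBelow ((n+1) • fx (k+2)) ((n+1) • fx (k+3)) := (hfx (k+2)).nsmul hCu (n+1)
  have h4x : (n+1) • fx (k+3) ≤ n • y :=
    le_trans (nsmul_le_nsmul_base hCu (hlubx.1 ⟨k+3, rfl⟩) (n+1)) hn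
  have hmgy : Monotone gy := chain_monotone hgy
  obtain ⟨j₀, hbj⟩ := (hwb.trans_le h4x) (fun m => n • gy m) (n • y)
    (fun i j hij => nsmul_le_nsmul_base hCu (hmgy hij) n)
    (IsLUB.nsmul_range hCu hmgy hluby n) le_rfl
  -- b := gy j₀  B := gy (j₀+1)  Bp := gy (j₀+2)
  have hBpwb : WayBelow (gy (j₀+2)) y := (hgy (j₀+2)).trans_le (hluby.1 ⟨j₀+3, rfl⟩)
  -- membership anchors
  obtain ⟨dx, hdx⟩ := mem_scaleAmp_of_le hCu hSg h0 (hfx (k+2))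
  obtain ⟨dB, hdB⟩ := mem_scaleAmp_of_le hCu hSg h0 hBpwb
  set D := max dx dB with hD
  -- gamma
  set γ₀ : ℝ≥0∞ := ((2*n+1 : ℕ) : ℝ≥0∞) / ((2*n+2 : ℕ) : ℝ≥0∞) with hγdef
  have h2n2 : ((2*n+2 : ℕ) : ℝ≥0∞) ≠ 0 := Nat.cast_ne_zero.mpr (by omega)
  have h2n2t : ((2*n+2 : ℕ) : ℝ≥0∞) ≠ ⊤ := ENNReal.natCast_ne_top _
  have hγpos : 0 < γ₀ :=
    ENNReal.div_pos (Nat.cast_ne_zero.mpr (by omega)) h2n2t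
  have hγlt : γ₀ < 1 := by
    rw [hγdef, ENNReal.div_lt_iff (Or.inl h2n2) (Or.inl h2n2t), one_mul]
    exact_mod_cast Nat.lt_succ_self _
  obtain ⟨N₀, hN₀⟩ := hL γ₀ hγpos hγlt (D+1)
  set N := max (max N₀ (4*n)) 1 with hNdef
  have hN1 : 1 ≤ N := le_max_right _ _
  have hN4n : 4*n ≤ N := le_trans (le_max_right _ _) (le_max_left _ _)
  have hNN₀ : N₀ ≤ N := le_trans (le_max_left _ _) (le_max_left _ _)
  -- divisions
  obtain ⟨g, hg1, hg2⟩ := hdiv (fx (k+1)) (fx (k+2)) (hfx (k+1)) N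
  obtain ⟨g1, hg1wb, hg1le⟩ := capture hCu (N+1) (hfx k) hg2
  obtain ⟨e, he1, he2⟩ := hdiv (gy (j₀+1)) (gy (j₀+2)) (hgy (j₀+1)) (N+1)
  obtain ⟨e1, he1wb, he1le⟩ := capture hCu (N+2) (hgy j₀) he2
  -- memberships
  have hgx3 : g1 ≤ fx (k+2) := by
    refine le_trans hg1wb.le (le_trans ?_ hg1)
    calc g = 1 • g := (one_nsmul g).symm
    _ ≤ N • g := nsmul_le_nsmul_scalar hCu hN1
  have heBp : e1 ≤ gy (j₀+2) := by
    refine le_trans he1wb.le (le_trans ?_ he1)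
    calc e = 1 • e := (one_nsmul e).symm
    _ ≤ (N+1) • e := nsmul_le_nsmul_scalar hCu (by omega)
  have hg1mem : g1 ∈ scaleAmp Sg (D+1) := hdx D (le_max_left _ _) g1 hgx3
  have he1mem : e1 ∈ scaleAmp Sg (D+1) := hdB D (le_max_right _ _) e1 heBp
  -- functional hypothesis
  have hfun : ∀ l : S → ℝ≥0∞, IsFunctional l → l g1 ≤ γ₀ * l e1 := by
    intro l hl
    have h1 : (N : ℝ≥0∞) * l g1 ≤ l (fx (k+2)) := by
      have := hl.mono (le_trans (nsmul_le_nsmul_base hCu hg1wb.le N) hg1)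
      rwa [hl.map_nsmul] at this
    have h2 : ((n+1 : ℕ) : ℝ≥0∞) * l (fx (k+2)) ≤ (n : ℝ≥0∞) * l (gy j₀) := by
      have := hl.mono hbj
      rwa [hl.map_nsmul, hl.map_nsmul] at this
    have h3 : l (gy j₀) ≤ ((N+2 : ℕ) : ℝ≥0∞) * l e1 := by
      have := hl.mono he1le
      rwa [hl.map_nsmul] at this
    -- chain: (n+1)*N*(l g1) ≤ (n+1)*l x₃ ≤ n * l b ≤ n*(N+2)* l e1
    have hT : (((n+1)*N : ℕ) : ℝ≥0∞) * l g1 ≤ ((n*(N+2) : ℕ) : ℝ≥0∞) * l e1 := by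
      push_cast
      calc ((n:ℝ≥0∞)+1) * N * l g1 = ((n:ℝ≥0∞)+1) * ((N:ℝ≥0∞) * l g1) := by ring
      _ ≤ ((n:ℝ≥0∞)+1) * l (fx (k+2)) := mul_le_mul_right h1 _
      _ ≤ (n : ℝ≥0∞) * l (gy j₀) := by push_cast at h2; exact h2
      _ ≤ (n : ℝ≥0∞) * (((N:ℝ≥0∞)+2) * l e1) := by
          refine mul_le_mul_right ?_ _
          push_cast at h3; exact h3
      _ = (n:ℝ≥0∞) * ((N:ℝ≥0∞)+2) * l e1 := by ring
    have hkeyN : ((2*n+2 : ℕ) : ℝ≥0∞) * l g1 ≤ ((2*n+1 : ℕ) : ℝ≥0∞) * l e1 := by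
      have hTne : (((n+1)*N : ℕ) : ℝ≥0∞) ≠ 0 := by
        simp only [ne_eq, Nat.cast_eq_zero]
        positivity
      have hTnt : (((n+1)*N : ℕ) : ℝ≥0∞) ≠ ⊤ := ENNReal.natCast_ne_top _
      rw [← ENNReal.mul_le_mul_iff_right hTne hTnt]
      have harith : ((n+1)*N : ℕ) * (2*n+1) ≥ (2*n+2) * (n*(N+2)) := by nlinarith [hN4n]
      calc (((n+1)*N : ℕ) : ℝ≥0∞) * (((2*n+2 : ℕ) : ℝ≥0∞) * l g1)
          = ((2*n+2 : ℕ) : ℝ≥0∞) * ((((n+1)*N : ℕ) : ℝ≥0∞) * l g1) := by ring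
        _ ≤ ((2*n+2 : ℕ) : ℝ≥0∞) * (((n*(N+2) : ℕ) : ℝ≥0∞) * l e1) := mul_le_mul_right hT _
        _ = (((2*n+2) * (n*(N+2)) : ℕ) : ℝ≥0∞) * l e1 := by push_cast; ring
        _ ≤ ((((n+1)*N) * (2*n+1) : ℕ) : ℝ≥0∞) * l e1 := by
            refine mul_le_mul_left ?_ _
            exact_mod_cast harith
        _ = (((n+1)*N : ℕ) : ℝ≥0∞) * (((2*n+1 : ℕ) : ℝ≥0∞) * l e1) := by push_cast; ring
    have hrw : γ₀ * l e1 = (((2*n+1:ℕ):ℝ≥0∞) * l e1) / ((2*n+2:ℕ):ℝ≥0∞) := by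
      rw [hγdef, div_eq_mul_inv, div_eq_mul_inv]; ring
    rw [hrw, ENNReal.le_div_iff_mul_le (Or.inl h2n2) (Or.inl h2n2t)]
    calc l g1 * ((2*n+2 : ℕ) : ℝ≥0∞) = ((2*n+2 : ℕ) : ℝ≥0∞) * l g1 := mul_comm _ _
    _ ≤ ((2*n+1 : ℕ) : ℝ≥0∞) * l e1 := hkeyN
  have hkey := hN₀ g1 e1 hg1mem he1mem hfun (N+1) (by omega)
  calc fx k ≤ (N+1) • g1 := hg1le
  _ ≤ (N+1) • e1 := hkey
  _ ≤ (N+1) • e := nsmul_le_nsmul_base hCu he1wb.le (N+1)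
  _ ≤ gy (j₀+2) := he1
  _ ≤ y := hBpwb.le

end ScaleLemmas


section NatHelp

theorem natHelp1 (K₀ m m' : ℕ) (hm' : 1 ≤ m') (hlt : m' < m) :
    (m'^((K₀+1)*(m'+1)) + 1) * K₀ ≤ m^((K₀+1)*(m'+1)) := by
  have h1 : ∀ u : ℕ, m'^(u+1) + (u+1)*(m'^u) ≤ m^(u+1) := by
    intro u
    induction u with
    | zero => simpa using hlt
    | succ u ih =>
      have hm : m' + 1 ≤ m := hlt
      have hp : 1 ≤ m'^u := Nat.one_le_pow _ _ hm'
      calc m'^(u+1+1) + (u+1+1)*(m'^(u+1))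
          ≤ (m'+1) * (m'^(u+1) + (u+1)*(m'^u)) := by ring_nf; nlinarith [hp, hm']
      _ ≤ m * (m'^(u+1) + (u+1)*(m'^u)) := Nat.mul_le_mul_right _ hm
      _ ≤ m * m^(u+1) := Nat.mul_le_mul_left _ ih
      _ = m^(u+1+1) := by ring
  set t := (K₀+1)*(m'+1) with ht
  have ht1 : t = (t - 1) + 1 := by
    have h0t : 0 < t := by rw [ht]; positivity
    omega
  have h2 := h1 (t - 1)
  rw [← ht1] at h2
  have hp : 1 ≤ m'^(t-1) := Nat.one_le_pow _ _ hm'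
  have hsplit : m'^t = m' * m'^(t - 1) := by
    conv_lhs => rw [ht1]
    rw [pow_succ]; ring
  have htbig : (K₀+1)*(m'+1) ≤ t := le_rfl
  -- (t - 1) + 1 = t and t ≥ (K₀+1), so (t)*(m'^(t-1)) ≥ ...
  nlinarith [h2, hp, hsplit, hm', Nat.one_le_pow (t-1) m' (by omega : 0 < m')]

end NatHelp

section Indicator

variable {S : Type*} [AddCommMonoid S] [PartialOrder S] (hCu : IsCuSemigroup S)

attribute [local instance] Classical.propDecidable

/-- the σ-ideal generated by y -/
def sIdeal (y : S) : Set S := {z | ∀ w, WayBelow w z → ∃ m : ℕ, w ≤ m • y}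

include hCu

theorem sIdeal_mem_of_le {y a b : S} (h : a ≤ b) (hb : b ∈ sIdeal y) : a ∈ sIdeal y :=
  fun w hw => hb w (hw.trans_le h)

theorem sIdeal_add {y a b : S} (ha : a ∈ sIdeal y) (hb : b ∈ sIdeal y) :
    a + b ∈ sIdeal y := by
  intro w hw
  obtain ⟨fa, hfa, hluba⟩ := hCu.O2 a
  obtain ⟨fb, hfb, hlubb⟩ := hCu.O2 b
  have hma := chain_monotone hfa
  have hmb := chain_monotone hfb
  obtain ⟨i, hi⟩ := hw (fun m => fa m + fb m) (a + b)
    (fun p q hpq => hCu.add_le_add (hma hpq) (hmb hpq))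
    (hCu.O4 fa fb a b hma hmb hluba hlubb) le_rfl
  obtain ⟨m₁, hm₁⟩ := ha (fa i) ((hfa i).trans_le (hluba.1 ⟨i+1, rfl⟩))
  obtain ⟨m₂, hm₂⟩ := hb (fb i) ((hfb i).trans_le (hlubb.1 ⟨i+1, rfl⟩))
  exact ⟨m₁ + m₂, hi.trans (by rw [add_nsmul]; exact hCu.add_le_add hm₁ hm₂)⟩

theorem sIdeal_sup {y : S} {f : ℕ → S} {s : S} (hmono : Monotone f)
    (hlub : IsLUB (Set.range f) s) (hf : ∀ i, f i ∈ sIdeal y) : s ∈ sIdeal y := by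
  intro w hw
  obtain ⟨u, hwu, hus⟩ := wayBelow_interpolate hCu hw
  obtain ⟨i, hi⟩ := hus f s hmono hlub le_rfl
  exact hf i w (hwu.trans_le hi)

theorem indicator_functional (y : S) :
    IsFunctional (fun z => if z ∈ sIdeal y then (0:ℝ≥0∞) else ⊤) := by
  constructor
  · intro a b hab
    by_cases ha : a ∈ sIdeal y
    · simp [ha]
    · have hb : b ∉ sIdeal y := fun hb => ha (sIdeal_mem_of_le hCu hab hb)
      simp [ha, hb]
  · have : (0:S) ∈ sIdeal y := fun w hw => ⟨0, by simpa using hw.le⟩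
    simp [this]
  · intro a b
    by_cases ha : a ∈ sIdeal y <;> by_cases hb : b ∈ sIdeal y
    · have : a + b ∈ sIdeal y := sIdeal_add hCu ha hb
      simp [ha, hb, this]
    · have : a + b ∉ sIdeal y :=
        fun h => hb (sIdeal_mem_of_le hCu (le_add_left' hCu b a) h)
      simp [ha, hb, this]
    · have : a + b ∉ sIdeal y :=
        fun h => ha (sIdeal_mem_of_le hCu (le_add_right' hCu a b) h)
      simp [ha, hb, this]
    · have : a + b ∉ sIdeal y :=
        fun h => ha (sIdeal_mem_of_le hCu (le_add_right' hCu a b) h)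
      simp [ha, hb, this]
  · intro f s hmono hlub
    by_cases hs : s ∈ sIdeal y
    · have hf : ∀ i, f i ∈ sIdeal y :=
        fun i => sIdeal_mem_of_le hCu (hlub.1 ⟨i, rfl⟩) hs
      simp [hs, hf]
    · have : ¬ ∀ i, f i ∈ sIdeal y := fun hf => hs (sIdeal_sup hCu hmono hlub hf)
      push_neg at this
      obtain ⟨i, hi⟩ := this
      have htop : (⨆ n, if f n ∈ sIdeal y then (0:ℝ≥0∞) else ⊤) = ⊤ := by
        refine top_le_iff.mp (le_trans ?_ (le_iSup (fun n => if f n ∈ sIdeal y then (0:ℝ≥0∞) else ⊤) i))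
        simp [hi]
      simp only [hs, if_false, htop]

end Indicator

section Pumping

variable {S : Type*} [AddCommMonoid S] [PartialOrder S] (hCu : IsCuSemigroup S)
variable {x' y : S} {K₀ : ℕ} (hK : x' ≤ K₀ • y)
  (H : ∀ m : ℕ, 1 ≤ m → ¬ ((m+1) • x' ≤ m • y)) (hx'0 : ¬ (x' ≤ 0))

include hCu hK H hx'0

theorem lemB : ∀ m m' : ℕ, m • y ≤ m' • y → m ≤ m' := by
  intro m m' hle
  by_contra hlt
  push_neg at hlt
  rcases Nat.eq_zero_or_pos m' with rfl | hm'
  · have hy0 : y ≤ 0 := by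
      have h1 : (1:ℕ) • y ≤ m • y := nsmul_le_nsmul_scalar hCu hlt
      simpa using h1.trans hle
    refine hx'0 (hK.trans ?_)
    calc K₀ • y ≤ K₀ • (0:S) := nsmul_le_nsmul_base hCu hy0 K₀
    _ = 0 := smul_zero K₀
  · have hpow : ∀ t : ℕ, (m^t) • y ≤ (m'^t) • y := by
      intro t
      induction t with
      | zero => simp
      | succ t ih =>
        have e1 : (m^(t+1)) • y = m • ((m^t) • y) := by
          rw [pow_succ, nsmul_right]
        have e2 : m • ((m'^t) • y) = (m'^t) • (m • y) := by
          rw [← nsmul_left, ← nsmul_right]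
        have e3 : (m'^t) • (m' • y) = (m'^(t+1)) • y := by
          rw [pow_succ, ← nsmul_left]
        calc (m^(t+1)) • y = m • ((m^t) • y) := e1
        _ ≤ m • ((m'^t) • y) := nsmul_le_nsmul_base hCu ih m
        _ = (m'^t) • (m • y) := e2
        _ ≤ (m'^t) • (m' • y) := nsmul_le_nsmul_base hCu hle (m'^t)
        _ = (m'^(t+1)) • y := e3
    set t := (K₀+1)*(m'+1) with ht
    have hmt : ((m'^t) + 1) * K₀ ≤ m^t := natHelp1 K₀ m m' hm' hlt
    have hcontra : ((m'^t) + 1) • x' ≤ (m'^t) • y := by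
      calc ((m'^t) + 1) • x' ≤ ((m'^t) + 1) • (K₀ • y) :=
            nsmul_le_nsmul_base hCu hK _
      _ = (((m'^t) + 1) * K₀) • y := (nsmul_left y _ K₀).symm
      _ ≤ (m^t) • y := nsmul_le_nsmul_scalar hCu hmt
      _ ≤ (m'^t) • y := hpow t
    exact H (m'^t) (Nat.one_le_pow _ _ hm') hcontra

theorem lemA : ∀ p j p' : ℕ, 1 ≤ j → p • y + j • x' ≤ p' • y → p + j ≤ p' := by
  intro p j p' hj hle
  have hpp' : p ≤ p' := lemB hCu hK H hx'0 p p'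
    ((le_add_right' hCu _ _).trans hle)
  by_contra hc
  push_neg at hc
  set q := p' - p with hq
  have hp' : p' = p + q := by omega
  have hqj : q + 1 ≤ j := by omega
  have hpump : ∀ t : ℕ, p • y + ((t+1)*j) • x' ≤ (p + (t+1)*q) • y := by
    intro t
    induction t with
    | zero => simpa [hp'] using hle
    | succ t ih =>
      have e1 : p • y + ((t+2)*j) • x' = (p • y + ((t+1)*j) • x') + j • x' := by
        have : (t+2)*j = (t+1)*j + j := by ring
        rw [this, add_nsmul, add_assoc]
      have e2 : (p + (t+1)*q) • y + j • x' = ((t+1)*q) • y + (p • y + j • x') := by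
        rw [add_nsmul, add_comm (p • y), add_assoc]
      have e3 : ((t+1)*q) • y + p' • y = (p + (t+2)*q) • y := by
        have h4 : p + (t+2)*q = (t+1)*q + p' := by
          have h5 : (t+2)*q = (t+1)*q + q := by ring
          omega
        rw [h4, add_nsmul]
      calc p • y + ((t+2)*j) • x'
          = (p • y + ((t+1)*j) • x') + j • x' := e1
      _ ≤ (p + (t+1)*q) • y + j • x' := hCu.add_le_add ih le_rfl
      _ = ((t+1)*q) • y + (p • y + j • x') := e2
      _ ≤ ((t+1)*q) • y + p' • y := hCu.add_le_add le_rfl hle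
      _ = (p + (t+2)*q) • y := e3
  have hfin := hpump p
  set A := (p+1)*j with hA
  set B := p + (p+1)*q with hB
  have hAx : A • x' ≤ B • y := (le_add_left' hCu _ _).trans hfin
  have hBA : B + 1 ≤ A := by
    have h1 : (p+1)*(q+1) ≤ (p+1)*j := Nat.mul_le_mul_left _ hqj
    have h2 : (p+1)*(q+1) = (p+1)*q + (p+1) := by ring
    omega
  rcases Nat.eq_zero_or_pos B with hB0 | hB1
  · refine hx'0 ?_
    have h1 : (1:ℕ) • x' ≤ A • x' := nsmul_le_nsmul_scalar hCu (by omega)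
    have h2 := h1.trans hAx
    rw [hB0] at h2
    simpa using h2
  · exact H B hB1 (le_trans (nsmul_le_nsmul_scalar hCu hBA) hAx)

end Pumping


section PreState

variable {S : Type*} [AddCommMonoid S] [PartialOrder S]

structure CuPreState (S : Type*) [AddCommMonoid S] [PartialOrder S] where
  dom : AddSubmonoid S
  f : S → ℝ≥0∞
  zero' : f 0 = 0
  add' : ∀ a ∈ dom, ∀ b ∈ dom, f (a + b) = f a + f b
  norm' : ∀ z : S, f z = ⨆ r : {a : S // a ∈ dom ∧ a ≤ z}, f r.1

instance : Preorder (CuPreState S) where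
  le p q := p.dom ≤ q.dom ∧ ∀ z ∈ p.dom, q.f z = p.f z
  le_refl p := ⟨le_rfl, fun _ _ => rfl⟩
  le_trans p q r hpq hqr :=
    ⟨hpq.1.trans hqr.1, fun z hz => (hqr.2 z (hpq.1 hz)).trans (hpq.2 z hz)⟩

theorem CuPreState.le_def {p q : CuPreState S} :
    p ≤ q ↔ p.dom ≤ q.dom ∧ ∀ z ∈ p.dom, q.f z = p.f z := Iff.rfl

theorem CuPreState.mono (p : CuPreState S) {a b : S} (h : a ≤ b) : p.f a ≤ p.f b := by
  rw [p.norm' a, p.norm' b]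
  exact iSup_le fun r => le_iSup_of_le ⟨r.1, r.2.1, r.2.2.trans h⟩ le_rfl

theorem CuPreState.fsmul (p : CuPreState S) {a : S} (ha : a ∈ p.dom) (k : ℕ) :
    p.f (k • a) = k * p.f a := by
  induction k with
  | zero => simpa using p.zero'
  | succ n ih =>
    rw [succ_nsmul, p.add' _ (nsmul_mem ha n) _ ha, ih, Nat.cast_succ,
      add_mul, one_mul]

/-- generators for the canonical one-step extension value -/
def GenT (p : CuPreState S) (x : S) : Type _ :=
  {t : S × S × ℕ // t.1 ∈ p.dom ∧ t.2.1 ∈ p.dom ∧ 1 ≤ t.2.2 ∧ t.1 ≤ t.2.1 + t.2.2 • x}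

noncomputable def genVal (p : CuPreState S) (x : S) (t : GenT p x) : ℝ≥0∞ :=
  (p.f t.1.1 - p.f t.1.2.1) / (t.1.2.2 : ℝ≥0∞)

noncomputable def cSup (p : CuPreState S) (x : S) : ℝ≥0∞ := ⨆ t : GenT p x, genVal p x t

/-- the crux condition for an extension value -/
def Crux (p : CuPreState S) (x : S) (c : ℝ≥0∞) : Prop :=
  ∀ b ∈ p.dom, ∀ A ∈ p.dom, ∀ j K : ℕ, b + j • x ≤ A + K • x →
    p.f b + (j : ℝ≥0∞) * c ≤ p.f A + (K : ℝ≥0∞) * c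

theorem gen_bound (p : CuPreState S) (x : S) {d e : S} {m : ℕ} {c : ℝ≥0∞}
    (hd : d ∈ p.dom) (he : e ∈ p.dom) (hm : 1 ≤ m) (hle : d ≤ e + m • x)
    (hc : cSup p x ≤ c) : p.f d ≤ p.f e + (m : ℝ≥0∞) * c := by
  have h1 : genVal p x ⟨(d,e,m), hd, he, hm, hle⟩ ≤ c :=
    le_trans (le_iSup (genVal p x) _) hc
  have hm0 : (m:ℝ≥0∞) ≠ 0 := Nat.cast_ne_zero.mpr (by omega)
  have hmt : (m:ℝ≥0∞) ≠ ⊤ := ENNReal.natCast_ne_top m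
  simp only [genVal] at h1
  rw [ENNReal.div_le_iff hm0 hmt] at h1
  rw [tsub_le_iff_left] at h1
  exact h1.trans (by rw [mul_comm])

/-- the key ENNReal arithmetic step -/
theorem ennArith {fb fA fd fe C : ℝ≥0∞} {m j : ℕ} (hm : 1 ≤ m)
    (hbase : fb ≤ fA + C)
    (hmain : (m:ℝ≥0∞)*fb + (j:ℝ≥0∞)*fd ≤ (m:ℝ≥0∞)*fA + (j:ℝ≥0∞)*fe + (m:ℝ≥0∞)*C) :
    fb + (j:ℝ≥0∞)*((fd - fe)/(m:ℝ≥0∞)) ≤ fA + C := by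
  rcases Nat.eq_zero_or_pos j with rfl | hj
  · simpa using hbase
  have hm0 : (m:ℝ≥0∞) ≠ 0 := Nat.cast_ne_zero.mpr (by omega)
  have hmt : (m:ℝ≥0∞) ≠ ⊤ := ENNReal.natCast_ne_top m
  by_cases hfe : fe = ⊤
  · subst hfe
    rw [ENNReal.sub_top, ENNReal.zero_div, mul_zero, add_zero]
    exact hbase
  by_cases hfd : fd ≤ fe
  · rw [tsub_eq_zero_of_le hfd, ENNReal.zero_div, mul_zero, add_zero]
    exact hbase
  by_cases hRT : fA + C = ⊤
  · rw [hRT]; exact le_top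
  refine (ENNReal.mul_le_mul_iff_right hm0 hmt).mp ?_
  have hdist : (m:ℝ≥0∞) * (fb + (j:ℝ≥0∞)*((fd-fe)/(m:ℝ≥0∞)))
      = (m:ℝ≥0∞)*fb + (j:ℝ≥0∞)*(fd-fe) := by
    rw [mul_add]
    congr 1
    rw [← mul_assoc, mul_comm (m:ℝ≥0∞) (j:ℝ≥0∞), mul_assoc,
      ENNReal.mul_div_cancel' (fun h => absurd h hm0) (fun h => absurd h hmt)]
  rw [hdist, mul_add]
  have hsub : (j:ℝ≥0∞)*(fd - fe) = (j:ℝ≥0∞)*fd - (j:ℝ≥0∞)*fe :=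
    ENNReal.mul_sub (fun _ _ => ENNReal.natCast_ne_top j)
  rw [hsub]
  have hb' : (m:ℝ≥0∞)*fb ≤ (m:ℝ≥0∞)*fA + (m:ℝ≥0∞)*C := by
    calc (m:ℝ≥0∞)*fb ≤ (m:ℝ≥0∞)*(fA + C) := mul_le_mul_right hbase _
    _ = (m:ℝ≥0∞)*fA + (m:ℝ≥0∞)*C := mul_add _ _ _
  have h2 : (j:ℝ≥0∞)*fd - (j:ℝ≥0∞)*fe ≤ ((m:ℝ≥0∞)*fA + (m:ℝ≥0∞)*C) - (m:ℝ≥0∞)*fb := by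
    rw [tsub_le_iff_left]
    have hsumt : (m:ℝ≥0∞)*fA + (m:ℝ≥0∞)*C ≠ ⊤ := by
      rw [← mul_add]; exact ENNReal.mul_ne_top hmt hRT
    have hfbt : (m:ℝ≥0∞)*fb ≠ ⊤ := ne_top_of_le_ne_top hsumt hb'
    have h3 : (j:ℝ≥0∞)*fd ≤ ((m:ℝ≥0∞)*fA + (j:ℝ≥0∞)*fe + (m:ℝ≥0∞)*C) - (m:ℝ≥0∞)*fb :=
      ENNReal.le_sub_of_add_le_left hfbt hmain
    refine h3.trans ?_
    have h4 : (((m:ℝ≥0∞)*fA + (m:ℝ≥0∞)*C) - (m:ℝ≥0∞)*fb) + (m:ℝ≥0∞)*fb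
        = (m:ℝ≥0∞)*fA + (m:ℝ≥0∞)*C := tsub_add_cancel_of_le hb'
    rw [tsub_le_iff_right, add_assoc ((j:ℝ≥0∞)*fe), h4]
    exact le_of_eq (by ring)
  calc (m:ℝ≥0∞)*fb + ((j:ℝ≥0∞)*fd - (j:ℝ≥0∞)*fe)
      ≤ (m:ℝ≥0∞)*fb + (((m:ℝ≥0∞)*fA + (m:ℝ≥0∞)*C) - (m:ℝ≥0∞)*fb) := add_le_add_right h2 _
  _ = (m:ℝ≥0∞)*fA + (m:ℝ≥0∞)*C := add_tsub_cancel_of_le hb'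

variable (hCu : IsCuSemigroup S)
include hCu

/-- combined certificate -/
theorem combine_cert {b A d e x : S} {j K m : ℕ}
    (h1 : b + j • x ≤ A + K • x) (h2 : d ≤ e + m • x) :
    m • b + j • d ≤ (m • A + j • e) + (m*K) • x := by
  have e1 : j • (e + m • x) = j • e + (j*m) • x := by rw [smul_add, nsmul_left]
  have e2 : m • (b + j • x) = m • b + (m*j) • x := by rw [smul_add, nsmul_left]
  have e3 : m • (A + K • x) = m • A + (m*K) • x := by rw [smul_add, nsmul_left]
  have hmj : (j*m) = m*j := mul_comm j m
  calc m • b + j • d ≤ m • b + (j • e + (j*m) • x) := by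
        refine hCu.add_le_add le_rfl ?_
        rw [← e1]; exact nsmul_le_nsmul_base hCu h2 j
  _ = j • e + (m • b + (m*j) • x) := by rw [hmj]; abel
  _ = j • e + m • (b + j • x) := by rw [e2]
  _ ≤ j • e + m • (A + K • x) := hCu.add_le_add le_rfl (nsmul_le_nsmul_base hCu h1 m)
  _ = j • e + (m • A + (m*K) • x) := by rw [e3]
  _ = (m • A + j • e) + (m*K) • x := by abel

/-- generic crux for the canonical sup value -/
theorem crux_cSup (p : CuPreState S) (x : S) : Crux p x (cSup p x) := by
  intro b hb A hA j K h
  rcases Nat.eq_zero_or_pos j with rfl | hj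
  · simp only [Nat.cast_zero, zero_mul, add_zero]
    rcases Nat.eq_zero_or_pos K with rfl | hK
    · simp only [Nat.cast_zero, zero_mul, add_zero]
      exact p.mono (by simpa using h)
    · exact gen_bound p x hb hA hK (by simpa using h) le_rfl
  have hbA : b ≤ A + K • x := le_trans (le_add_right' hCu b (j • x)) h
  rcases Nat.eq_zero_or_pos K with rfl | hK
  · -- upper branch : b + j • x ≤ A (as K = 0)
    have hA' : b + j • x ≤ A := by simpa using h
    simp only [Nat.cast_zero, zero_mul, add_zero]
    cases isEmpty_or_nonempty (GenT p x) with
    | inl hemp =>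
      rw [cSup, iSup_of_empty, ENNReal.bot_eq_zero, mul_zero, add_zero]
      exact p.mono (le_trans (le_add_right' hCu b (j • x)) hA')
    | inr hne =>
      have hL : p.f b + (j:ℝ≥0∞) * cSup p x
          = ⨆ t : GenT p x, (p.f b + (j:ℝ≥0∞) * genVal p x t) := by
        rw [cSup, ENNReal.mul_iSup, ENNReal.add_iSup]
      rw [hL]
      refine iSup_le fun t => ?_
      obtain ⟨⟨d, e, m⟩, hd, he, hm, hcert⟩ := t
      have hcomb : m • b + j • d ≤ m • A + j • e := by
        have := combine_cert hCu h hcert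
        simpa using this
      have hvals : (m:ℝ≥0∞) * p.f b + (j:ℝ≥0∞) * p.f d
          ≤ (m:ℝ≥0∞) * p.f A + (j:ℝ≥0∞) * p.f e + (m:ℝ≥0∞) * 0 := by
        rw [mul_zero, add_zero]
        have := p.mono hcomb
        rw [p.add' _ (nsmul_mem hb m) _ (nsmul_mem hd j),
          p.add' _ (nsmul_mem hA m) _ (nsmul_mem he j),
          p.fsmul hb, p.fsmul hd, p.fsmul hA, p.fsmul he] at this
        exact this
      have hbase0 : p.f b ≤ p.f A + 0 := by
        rw [add_zero]
        exact p.mono (le_trans (le_add_right' hCu b (j • x)) hA')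
      have := ennArith hm hbase0 hvals
      simpa [genVal] using this
  · -- main branch j ≥ 1, K ≥ 1
    have hne : Nonempty (GenT p x) := ⟨⟨(b, A, K), hb, hA, hK, hbA⟩⟩
    have hL : p.f b + (j:ℝ≥0∞) * cSup p x
        = ⨆ t : GenT p x, (p.f b + (j:ℝ≥0∞) * genVal p x t) := by
      rw [cSup, ENNReal.mul_iSup, ENNReal.add_iSup]
    rw [hL]
    refine iSup_le fun t => ?_
    obtain ⟨⟨d, e, m⟩, hd, he, hm, hcert⟩ := t
    have hcomb := combine_cert hCu h hcert
    have hbase : p.f b ≤ p.f A + (K:ℝ≥0∞) * cSup p x := gen_bound p x hb hA hK hbA le_rfl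
    have hmK : 1 ≤ m * K := Nat.one_le_iff_ne_zero.mpr (by positivity)
    have hcombm : m • b + j • d ∈ p.dom ∧ m • A + j • e ∈ p.dom :=
      ⟨AddSubmonoid.add_mem _ (nsmul_mem hb m) (nsmul_mem hd j),
       AddSubmonoid.add_mem _ (nsmul_mem hA m) (nsmul_mem he j)⟩
    have hgen := gen_bound p x hcombm.1 hcombm.2 hmK hcomb le_rfl
    have hvals : (m:ℝ≥0∞) * p.f b + (j:ℝ≥0∞) * p.f d
        ≤ (m:ℝ≥0∞) * p.f A + (j:ℝ≥0∞) * p.f e + (m:ℝ≥0∞) * ((K:ℝ≥0∞) * cSup p x) := by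
      rw [p.add' _ (nsmul_mem hb m) _ (nsmul_mem hd j),
        p.add' _ (nsmul_mem hA m) _ (nsmul_mem he j),
        p.fsmul hb, p.fsmul hd, p.fsmul hA, p.fsmul he] at hgen
      refine hgen.trans (le_of_eq ?_)
      rw [Nat.cast_mul]; ring
    have := ennArith hm hbase hvals
    simpa [genVal] using this

end PreState


section OneStep

variable {S : Type*} [AddCommMonoid S] [PartialOrder S]

noncomputable def extFun (p : CuPreState S) (x : S) (c : ℝ≥0∞) : S → ℝ≥0∞ :=
  fun z => ⨆ r : {t : S × ℕ // t.1 ∈ p.dom ∧ t.1 + t.2 • x ≤ z},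
    (p.f r.1.1 + (r.1.2 : ℝ≥0∞) * c)

theorem extFun_mono (p : CuPreState S) (x : S) (c : ℝ≥0∞) {z₁ z₂ : S} (h : z₁ ≤ z₂) :
    extFun p x c z₁ ≤ extFun p x c z₂ :=
  iSup_le fun r => le_iSup_of_le ⟨r.1, r.2.1, r.2.2.trans h⟩ le_rfl

theorem extFun_eq (p : CuPreState S) (x : S) (c : ℝ≥0∞) (hc : Crux p x c)
    {z : S} (hz : z ∈ p.dom) : extFun p x c z = p.f z := by
  refine le_antisymm (iSup_le fun r => ?_) ?_
  · have := hc r.1.1 r.2.1 z hz r.1.2 0 (by simpa using r.2.2)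
    simpa using this
  · refine le_iSup_of_le ⟨(z, 0), hz, by simp⟩ ?_
    simp

theorem le_f_mono {p q : CuPreState S} (h : q ≤ p) (z : S) : q.f z ≤ p.f z := by
  conv_lhs => rw [q.norm' z]
  refine iSup_le fun r => ?_
  calc q.f r.1 = p.f r.1 := (h.2 r.1 r.2.1).symm
  _ ≤ p.f z := p.mono r.2.2

variable (hCu : IsCuSemigroup S)

noncomputable def oneStep (p : CuPreState S) (x : S) (c : ℝ≥0∞)
    (hc : Crux p x c) : CuPreState S where
  dom := p.dom ⊔ AddSubmonoid.closure {x}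
  f := extFun p x c
  zero' := by rw [extFun_eq p x c hc (zero_mem _)]; exact p.zero'
  add' := by
    intro a ha b hb
    obtain ⟨a₁, ha₁, w₁, hw₁, rfl⟩ := AddSubmonoid.mem_sup.mp ha
    obtain ⟨a₂, ha₂, w₂, hw₂, rfl⟩ := AddSubmonoid.mem_sup.mp hb
    obtain ⟨k₁, rfl⟩ := AddSubmonoid.mem_closure_singleton.mp hw₁
    obtain ⟨k₂, rfl⟩ := AddSubmonoid.mem_closure_singleton.mp hw₂
    have hre : (a₁ + k₁ • x) + (a₂ + k₂ • x) = (a₁ + a₂) + (k₁ + k₂) • x := by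
      rw [add_nsmul]; abel
    have hne1 : Nonempty {t : S × ℕ // t.1 ∈ p.dom ∧ t.1 + t.2 • x ≤ a₁ + k₁ • x} :=
      ⟨⟨(0,0), zero_mem _, by simpa using hCu.zero_le _⟩⟩
    have hne2 : Nonempty {t : S × ℕ // t.1 ∈ p.dom ∧ t.1 + t.2 • x ≤ a₂ + k₂ • x} :=
      ⟨⟨(0,0), zero_mem _, by simpa using hCu.zero_le _⟩⟩
    refine le_antisymm (iSup_le fun r => ?_) ?_
    · -- r is a rep of the sum
      obtain ⟨⟨bb, j⟩, hbb, hcert⟩ := r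
      rw [hre] at hcert
      have hx := hc bb hbb (a₁ + a₂) (AddSubmonoid.add_mem _ ha₁ ha₂) j (k₁ + k₂) hcert
      rw [p.add' _ ha₁ _ ha₂] at hx
      have hsplit : p.f a₁ + p.f a₂ + ((k₁ + k₂ : ℕ) : ℝ≥0∞) * c
          = (p.f a₁ + (k₁ : ℝ≥0∞) * c) + (p.f a₂ + (k₂ : ℝ≥0∞) * c) := by
        push_cast; ring
      rw [hsplit] at hx
      refine hx.trans (add_le_add ?_ ?_)
      · exact le_iSup_of_le ⟨(a₁, k₁), ha₁, le_rfl⟩ le_rfl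
      · exact le_iSup_of_le ⟨(a₂, k₂), ha₂, le_rfl⟩ le_rfl
    · -- superadditivity
      show extFun p x c _ + extFun p x c _ ≤ extFun p x c _
      rw [extFun, extFun, ENNReal.iSup_add]
      refine iSup_le fun r₁ => ?_
      rw [ENNReal.add_iSup]
      refine iSup_le fun r₂ => ?_
      obtain ⟨⟨b₁, j₁⟩, hb₁, hc₁⟩ := r₁
      obtain ⟨⟨b₂, j₂⟩, hb₂, hc₂⟩ := r₂
      have hcert : (b₁ + b₂) + (j₁ + j₂) • x ≤ (a₁ + k₁ • x) + (a₂ + k₂ • x) := by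
        have : (b₁ + b₂) + (j₁ + j₂) • x = (b₁ + j₁ • x) + (b₂ + j₂ • x) := by
          rw [add_nsmul]; abel
        rw [this]
        exact hCu.add_le_add hc₁ hc₂
      refine le_trans (le_of_eq ?_)
        (le_iSup_of_le ⟨(b₁ + b₂, j₁ + j₂), AddSubmonoid.add_mem _ hb₁ hb₂, hcert⟩ le_rfl)
      show p.f b₁ + (j₁ : ℝ≥0∞) * c + (p.f b₂ + (j₂ : ℝ≥0∞) * c)
          = p.f (b₁ + b₂) + ((j₁ + j₂ : ℕ) : ℝ≥0∞) * c
      rw [p.add' _ hb₁ _ hb₂]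
      push_cast; ring
  norm' := by
    intro z
    refine le_antisymm (iSup_le fun r => ?_) (iSup_le fun r => extFun_mono p x c r.2.2)
    obtain ⟨⟨a, k⟩, ha, hcert⟩ := r
    have hmem : a + k • x ∈ p.dom ⊔ AddSubmonoid.closure {x} :=
      AddSubmonoid.add_mem _ (le_sup_left (a := p.dom) ha)
        ((le_sup_right (b := AddSubmonoid.closure {x}))
          (nsmul_mem (AddSubmonoid.mem_closure_singleton.mpr ⟨1, one_nsmul x⟩) k))
    refine le_trans ?_ (le_iSup_of_le ⟨a + k • x, hmem, hcert⟩ le_rfl)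
    exact le_iSup_of_le ⟨(a, k), ha, le_rfl⟩ le_rfl

theorem oneStep_le (p : CuPreState S) (x : S) (c : ℝ≥0∞) (hc : Crux p x c) :
    p ≤ oneStep hCu p x c hc :=
  ⟨le_sup_left, fun z hz => extFun_eq p x c hc hz⟩

theorem oneStep_mem (p : CuPreState S) (x : S) (c : ℝ≥0∞) (hc : Crux p x c) :
    x ∈ (oneStep hCu p x c hc).dom :=
  (le_sup_right (a := p.dom)) (AddSubmonoid.mem_closure_singleton.mpr ⟨1, one_nsmul x⟩)

theorem oneStep_val (p : CuPreState S) (x : S) (c : ℝ≥0∞) (hc : Crux p x c) :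
    c ≤ (oneStep hCu p x c hc).f x := by
  show c ≤ extFun p x c x
  refine le_iSup_of_le ⟨(0, 1), zero_mem _, ?_⟩ ?_
  · simp
  · simp [p.zero']

include hCu in
theorem exists_max_prestate (p₁ : CuPreState S) :
    ∃ P : CuPreState S, p₁ ≤ P ∧ P.dom = ⊤ := by
  have hchainub : ∀ c ⊆ Set.Ici p₁, IsChain (· ≤ ·) c → ∀ y ∈ c,
      ∃ ub, ∀ z ∈ c, z ≤ ub := by
    intro c _ hchain y hy
    haveI : Nonempty c := ⟨⟨y, hy⟩⟩
    have hdir : Directed (· ≤ ·) (fun p : c => (p : CuPreState S).dom) := by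
      intro p q
      rcases eq_or_ne p q with rfl | hne
      · exact ⟨p, le_rfl, le_rfl⟩
      rcases hchain.total p.2 q.2 with h | h
      · exact ⟨q, h.1, le_rfl⟩
      · exact ⟨p, le_rfl, h.1⟩
    have htot : ∀ p q : c, (p : CuPreState S) ≤ q ∨ (q : CuPreState S) ≤ p := by
      intro p q
      rcases eq_or_ne p q with rfl | hne
      · exact Or.inl le_rfl
      · exact hchain.total p.2 q.2
    have hkey : ∀ (p : c) (z : S), z ∈ (p : CuPreState S).dom →
        (⨆ q : c, (q : CuPreState S).f z) = (p : CuPreState S).f z := by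
      intro p z hz
      refine le_antisymm (iSup_le fun q => ?_) (le_iSup (fun q : c => (q : CuPreState S).f z) p)
      rcases htot q p with h | h
      · exact le_f_mono h z
      · exact le_of_eq (h.2 z hz)
    refine ⟨{ dom := ⨆ p : c, (p : CuPreState S).dom
              f := fun z => ⨆ p : c, (p : CuPreState S).f z
              zero' := le_antisymm (iSup_le fun p => le_of_eq (p : CuPreState S).zero')
                (zero_le)
              add' := ?_
              norm' := ?_ }, ?_⟩
    · intro a ha b hb
      show (⨆ r : c, (r : CuPreState S).f (a + b))
          = (⨆ r : c, (r : CuPreState S).f a) + ⨆ r : c, (r : CuPreState S).f b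
      obtain ⟨p, hpa⟩ := (AddSubmonoid.mem_iSup_of_directed hdir).mp ha
      obtain ⟨q, hqb⟩ := (AddSubmonoid.mem_iSup_of_directed hdir).mp hb
      rcases htot p q with h | h
      · have hpa' : a ∈ (q : CuPreState S).dom := h.1 hpa
        rw [hkey q _ (AddSubmonoid.add_mem _ hpa' hqb), (q : CuPreState S).add' _ hpa' _ hqb,
          hkey q a hpa', hkey q b hqb]
      · have hqb' : b ∈ (p : CuPreState S).dom := h.1 hqb
        rw [hkey p _ (AddSubmonoid.add_mem _ hpa hqb'), (p : CuPreState S).add' _ hpa _ hqb',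
          hkey p a hpa, hkey p b hqb']
    · intro z
      refine le_antisymm (iSup_le fun p => ?_) (iSup_le fun r => ?_)
      · conv_lhs => rw [(p : CuPreState S).norm' z]
        refine iSup_le fun r => ?_
        have hmem : r.1 ∈ ⨆ p : c, (p : CuPreState S).dom :=
          (le_iSup (fun p : c => (p : CuPreState S).dom) p) r.2.1
        refine le_trans ?_ (le_iSup_of_le ⟨r.1, hmem, r.2.2⟩ le_rfl)
        exact le_iSup (fun q : c => (q : CuPreState S).f r.1) p
      · -- r.1 ≤ z, show glue.f r.1 ≤ glue.f z
        exact iSup_mono fun p => (p : CuPreState S).mono r.2.2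
    · intro z hz
      exact ⟨le_iSup (fun p : c => (p : CuPreState S).dom) ⟨z, hz⟩,
        fun w hw => hkey ⟨z, hz⟩ w hw⟩
  obtain ⟨P, hP1, hPmax⟩ := zorn_le_nonempty_Ici₀ p₁ hchainub p₁ le_rfl
  refine ⟨P, hP1, ?_⟩
  by_contra hne
  obtain ⟨x, hx⟩ : ∃ x, x ∉ P.dom := by
    by_contra hall
    push_neg at hall
    exact hne ((AddSubmonoid.eq_top_iff' P.dom).mpr hall)
  have hcx := crux_cSup hCu P x
  have hPq : P ≤ oneStep hCu P x (cSup P x) hcx := oneStep_le hCu P x _ hcx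
  have hqP := hPmax hPq
  exact hx (hqP.1 (oneStep_mem hCu P x _ hcx))

end OneStep


section NatHelp2

theorem natHelp2 (p δ p' K M : ℕ) (h : (M+1)*p + ((M+1)*δ + K) ≤ (M+1)*p' + M)
    (hgt : p' + 1 ≤ p + δ) : False := by
  nlinarith [Nat.mul_le_mul_left (M+1) hgt]

theorem natHelp3 (p p' ε j : ℕ) (h : (j+1)*p ≤ (j+1)*p' + ((j+1)*ε + j)) : p ≤ p' + ε := by
  by_contra hc
  push_neg at hc
  nlinarith [Nat.mul_le_mul_left (j+1) (show p' + ε + 1 ≤ p by omega)]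

end NatHelp2

section MainFunctional

variable {S : Type*} [AddCommMonoid S] [PartialOrder S] (hCu : IsCuSemigroup S)
variable {x' y : S} {K₀ : ℕ} (hK : x' ≤ K₀ • y)
  (H : ∀ m : ℕ, 1 ≤ m → ¬ ((m+1) • x' ≤ m • y)) (hx'0 : ¬ (x' ≤ 0))

include hCu hK H hx'0

theorem exists_good_functional :
    ∃ l : S → ℝ≥0∞, IsFunctional l ∧ l y ≤ 1 ∧ ∀ X, WayBelow x' X → 1 ≤ l X := by
  have hy0 : ¬ (y ≤ 0) := by
    intro h
    refine hx'0 (hK.trans ?_)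
    calc K₀ • y ≤ K₀ • (0:S) := nsmul_le_nsmul_base hCu h K₀
    _ = 0 := smul_zero K₀
  set F : S → ℝ≥0∞ := fun z => ⨆ m : {m : ℕ // m • y ≤ z}, (m.1 : ℝ≥0∞) with hF
  have hval : ∀ p : ℕ, F (p • y) = p := by
    intro p
    refine le_antisymm (iSup_le fun r => ?_) (le_iSup_of_le ⟨p, le_rfl⟩ le_rfl)
    exact_mod_cast Nat.cast_le.mpr (lemB hCu hK H hx'0 r.1 p r.2)
  have hzero : F 0 = 0 := by
    refine le_antisymm (iSup_le fun r => ?_) (zero_le)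
    have hr0 : r.1 = 0 := by
      by_contra h
      refine hy0 (le_trans ?_ r.2)
      have h1 : (1:ℕ) • y ≤ r.1 • y := nsmul_le_nsmul_scalar hCu (by omega)
      simpa using h1
    simp [hr0]
  have hydom : y ∈ AddSubmonoid.closure ({y} : Set S) :=
    AddSubmonoid.mem_closure_singleton.mpr ⟨1, one_nsmul y⟩
  have hadd : ∀ a ∈ AddSubmonoid.closure ({y} : Set S),
      ∀ b ∈ AddSubmonoid.closure ({y} : Set S), F (a + b) = F a + F b := by
    intro a ha b hb
    obtain ⟨p, rfl⟩ := AddSubmonoid.mem_closure_singleton.mp ha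
    obtain ⟨q, rfl⟩ := AddSubmonoid.mem_closure_singleton.mp hb
    rw [← add_nsmul, hval, hval, hval]
    push_cast; ring
  have hnorm : ∀ z : S, F z =
      ⨆ r : {a : S // a ∈ AddSubmonoid.closure ({y} : Set S) ∧ a ≤ z}, F r.1 := by
    intro z
    refine le_antisymm (iSup_le fun m => ?_) (iSup_le fun r => ?_)
    · refine le_trans (le_of_eq (hval m.1).symm)
        (le_iSup_of_le ⟨m.1 • y, nsmul_mem hydom m.1, m.2⟩ le_rfl)
    · obtain ⟨p, hp⟩ := AddSubmonoid.mem_closure_singleton.mp r.2.1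
      have : F r.1 = p := by rw [← hp, hval]
      rw [this]
      refine le_trans (le_of_eq (hval p).symm) ?_
      rw [hval]
      exact le_iSup_of_le ⟨p, by rw [hp]; exact r.2.2⟩ le_rfl
  set p₀ : CuPreState S :=
    { dom := AddSubmonoid.closure ({y} : Set S), f := F,
      zero' := hzero, add' := hadd, norm' := hnorm } with hp₀
  have hfeq : p₀.f = F := rfl
  set cL := cSup p₀ x' with hcL
  set c₀ := max cL 1 with hc₀def
  have hcLc₀ : cSup p₀ x' ≤ c₀ := le_max_left _ _
  have hc₀1 : (1:ℝ≥0∞) ≤ c₀ := le_max_right _ _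
  -- THE CRUX
  have crux₀ : Crux p₀ x' c₀ := by
    intro b hb A hA j K hcert
    obtain ⟨p, rfl⟩ := AddSubmonoid.mem_closure_singleton.mp hb
    obtain ⟨p', rfl⟩ := AddSubmonoid.mem_closure_singleton.mp hA
    rw [hfeq, hval p, hval p']
    rcases Nat.eq_zero_or_pos j with rfl | hj
    · simp only [Nat.cast_zero, zero_mul, add_zero]
      rcases Nat.eq_zero_or_pos K with rfl | hK1
      · have hpp' : p ≤ p' := lemB hCu hK H hx'0 p p' (by simpa using hcert)
        simp only [Nat.cast_zero, zero_mul, add_zero]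
        exact_mod_cast hpp'
      · have hgb := gen_bound p₀ x' hb hA hK1 (by simpa using hcert) hcLc₀
        rw [hfeq, hval p, hval p'] at hgb
        exact hgb
    · rcases Nat.eq_zero_or_pos K with rfl | hK1
      · -- j ≥ 1, K = 0
        have hup : p • y + j • x' ≤ p' • y := by simpa using hcert
        have hA' : p + j ≤ p' := lemA hCu hK H hx'0 p j p' hj hup
        simp only [Nat.cast_zero, zero_mul, add_zero]
        rcases le_total cL 1 with h1 | h1
        · rw [hc₀def, max_eq_right h1, mul_one]
          exact_mod_cast hA'
        · rw [hc₀def, max_eq_left h1]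
          have hcx := crux_cSup hCu p₀ x' _ hb _ hA j 0 (by simpa using hcert)
          rw [hfeq, hval p, hval p'] at hcx
          simpa using hcx
      · -- j ≥ 1, K ≥ 1
        by_cases hcT : c₀ = ⊤
        · rw [hcT, ENNReal.mul_top (show (K:ℝ≥0∞) ≠ 0 from Nat.cast_ne_zero.mpr (by omega))]
          simp
        rcases le_total cL 1 with h1 | h1
        · -- c₀ = 1 : the nat inequality p + j ≤ p' + K
          have hc1 : c₀ = 1 := max_eq_right h1
          rw [hc1, mul_one, mul_one]
          have hnat : p + j ≤ p' + K := by
            rcases le_or_gt K j with hjK | hjK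
            · -- pump1
              set δ := j - K with hδdef
              have hδ : K + δ = j := by omega
              have claim1 : ∀ t : ℕ,
                  ((t+1)*p) • y + ((t+1)*δ + K) • x' ≤ ((t+1)*p') • y + K • x' := by
                intro t
                induction t with
                | zero =>
                  have e0 : 1*δ + K = j := by omega
                  have e0' : 1*p = p := one_mul p
                  have e0'' : 1*p' = p' := one_mul p'
                  rw [e0, e0', e0'']
                  exact hcert
                | succ t ih =>
                  have s1 : (t+1+1)*p = (t+1)*p + p := by ring
                  have s2 : (t+1+1)*δ + K = ((t+1)*δ + K) + δ := by ring
                  have s3 : (t+1+1)*p' = (t+1)*p' + p' := by ring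
                  calc ((t+1+1)*p) • y + ((t+1+1)*δ+K) • x'
                      = (((t+1)*p) • y + ((t+1)*δ+K) • x') + (p • y + δ • x') := by
                        rw [s1, s2, add_nsmul, add_nsmul]; abel
                  _ ≤ (((t+1)*p') • y + K • x') + (p • y + δ • x') :=
                        hCu.add_le_add ih le_rfl
                  _ = ((t+1)*p') • y + (p • y + (K+δ) • x') := by
                        rw [add_nsmul]; abel
                  _ = ((t+1)*p') • y + (p • y + j • x') := by rw [hδ]
                  _ ≤ ((t+1)*p') • y + (p' • y + K • x') := hCu.add_le_add le_rfl hcert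
                  _ = ((t+1+1)*p') • y + K • x' := by
                        rw [s3, add_nsmul]; abel
              have pure1 : ∀ t : ℕ,
                  ((t+1)*p) • y + ((t+1)*δ + K) • x' ≤ ((t+1)*p' + K*K₀) • y := by
                intro t
                refine (claim1 t).trans ?_
                have hKx : K • x' ≤ (K*K₀) • y := by
                  calc K • x' ≤ K • (K₀ • y) := nsmul_le_nsmul_base hCu hK K
                  _ = (K*K₀) • y := (nsmul_left y K K₀).symm
                rw [add_nsmul]
                exact hCu.add_le_add le_rfl hKx
              have hlemA : ∀ t : ℕ,
                  (t+1)*p + ((t+1)*δ + K) ≤ (t+1)*p' + K*K₀ := by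
                intro t
                exact lemA hCu hK H hx'0 ((t+1)*p) ((t+1)*δ + K) ((t+1)*p' + K*K₀)
                  (by omega) (pure1 t)
              by_contra hgt
              push_neg at hgt
              have hgt' : p' + 1 ≤ p + δ := by omega
              exact natHelp2 p δ p' K (K*K₀) (hlemA (K*K₀)) hgt'
            · -- j < K
              rcases le_or_gt p p' with hpp | hpp
              · omega
              · -- p' < p, use cL ≤ 1 generators
                set ε := K - j with hεdef
                have hε : j + ε = K := by omega
                have claim2 : ∀ t : ℕ,
                    ((t+1)*p) • y + j • x' ≤ ((t+1)*p') • y + ((t+1)*ε + j) • x' := by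
                  intro t
                  induction t with
                  | zero =>
                    have e0 : 1*ε + j = K := by omega
                    have e0' : 1*p = p := one_mul p
                    have e0'' : 1*p' = p' := one_mul p'
                    rw [e0, e0', e0'']
                    exact hcert
                  | succ t ih =>
                    have s1 : (t+1+1)*p = p + (t+1)*p := by ring
                    have s2 : (t+1+1)*ε + j = (t+1)*ε + K := by rw [← hε]; ring
                    have s3 : (t+1+1)*p' = (t+1)*p' + p' := by ring
                    calc ((t+1+1)*p) • y + j • x'
                        = p • y + (((t+1)*p) • y + j • x') := by
                          rw [s1, add_nsmul]; abel
                    _ ≤ p • y + (((t+1)*p') • y + ((t+1)*ε + j) • x') :=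
                          hCu.add_le_add le_rfl ih
                    _ = ((t+1)*p') • y + (((t+1)*ε) • x' + (p • y + j • x')) := by
                          rw [add_nsmul]; abel
                    _ ≤ ((t+1)*p') • y + (((t+1)*ε) • x' + (p' • y + K • x')) :=
                          hCu.add_le_add le_rfl (hCu.add_le_add le_rfl hcert)
                    _ = ((t+1+1)*p') • y + ((t+1+1)*ε + j) • x' := by
                          rw [s2, s3, add_nsmul, add_nsmul]; abel
                have hgen : ∀ t : ℕ, (t+1)*p ≤ (t+1)*p' + ((t+1)*ε + j) := by
                  intro t
                  have hm1 : 1 ≤ (t+1)*ε + j := by omega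
                  have hcert2 : ((t+1)*p) • y ≤ ((t+1)*p') • y + ((t+1)*ε + j) • x' :=
                    le_trans (le_add_right' hCu _ _) (claim2 t)
                  have hgv : genVal p₀ x' ⟨(((t+1)*p) • y, ((t+1)*p') • y, (t+1)*ε + j),
                      nsmul_mem hydom _, nsmul_mem hydom _, hm1, hcert2⟩ ≤ cL :=
                    le_iSup (genVal p₀ x') _
                  have hle1 : genVal p₀ x' ⟨(((t+1)*p) • y, ((t+1)*p') • y, (t+1)*ε + j),
                      nsmul_mem hydom _, nsmul_mem hydom _, hm1, hcert2⟩ ≤ 1 := hgv.trans h1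
                  unfold genVal at hle1
                  simp only at hle1
                  rw [hfeq, hval, hval] at hle1
                  have hm0 : (((t+1)*ε + j : ℕ) : ℝ≥0∞) ≠ 0 := Nat.cast_ne_zero.mpr (by omega)
                  have hmt : (((t+1)*ε + j : ℕ) : ℝ≥0∞) ≠ ⊤ := ENNReal.natCast_ne_top _
                  rw [ENNReal.div_le_iff hm0 hmt, one_mul, tsub_le_iff_left] at hle1
                  exact_mod_cast hle1
                have := natHelp3 p p' ε j (hgen j)
                omega
          exact_mod_cast hnat
        · -- 1 ≤ cL : use the generic crux
          have hc1 : c₀ = cL := max_eq_left h1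
          rw [hc1]
          have hcx := crux_cSup hCu p₀ x' _ hb _ hA j K hcert
          rw [hfeq, hval p, hval p'] at hcx
          exact hcx
  -- build the maximal state
  have hp₁le := oneStep_le hCu p₀ x' c₀ crux₀
  obtain ⟨P, hP1, hPtop⟩ := exists_max_prestate hCu (oneStep hCu p₀ x' c₀ crux₀)
  have hPx' : 1 ≤ P.f x' := by
    rw [hP1.2 x' (oneStep_mem hCu p₀ x' c₀ crux₀)]
    exact le_trans hc₀1 (oneStep_val hCu p₀ x' c₀ crux₀)
  have hPy : P.f y = 1 := by
    rw [hP1.2 y (hp₁le.1 hydom), hp₁le.2 y hydom]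
    have h1 := hval 1
    rw [one_nsmul] at h1
    rw [hfeq, h1, Nat.cast_one]
  have hmemtop : ∀ z : S, z ∈ P.dom := by
    intro z; rw [hPtop]; exact AddSubmonoid.mem_top z
  have hPadd : ∀ a b : S, P.f (a + b) = P.f a + P.f b :=
    fun a b => P.add' a (hmemtop a) b (hmemtop b)
  -- regularize
  refine ⟨fun z => ⨆ w : {w : S // WayBelow w z}, P.f w.1, ⟨?_, ?_, ?_, ?_⟩, ?_, ?_⟩
  · intro a b hab
    exact iSup_le fun w => le_iSup_of_le ⟨w.1, w.2.trans_le hab⟩ le_rfl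
  · refine le_antisymm (iSup_le fun w => ?_) (zero_le)
    calc P.f w.1 ≤ P.f 0 := P.mono w.2.le
    _ = 0 := P.zero'
  · intro a b
    haveI : Nonempty {w : S // WayBelow w a} := ⟨⟨0, wayBelow_zero hCu a⟩⟩
    haveI : Nonempty {w : S // WayBelow w b} := ⟨⟨0, wayBelow_zero hCu b⟩⟩
    refine le_antisymm (iSup_le fun w => ?_) ?_
    · obtain ⟨fa, hfa, hluba⟩ := hCu.O2 a
      obtain ⟨fb, hfb, hlubb⟩ := hCu.O2 b
      have hma := chain_monotone hfa
      have hmb := chain_monotone hfb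
      obtain ⟨i, hi⟩ := w.2 (fun m => fa m + fb m) (a + b)
        (fun u v huv => hCu.add_le_add (hma huv) (hmb huv))
        (hCu.O4 fa fb a b hma hmb hluba hlubb) le_rfl
      calc P.f w.1 ≤ P.f (fa i + fb i) := P.mono hi
      _ = P.f (fa i) + P.f (fb i) := hPadd _ _
      _ ≤ _ := add_le_add
          (le_iSup_of_le ⟨fa i, (hfa i).trans_le (hluba.1 ⟨i+1, rfl⟩)⟩ le_rfl)
          (le_iSup_of_le ⟨fb i, (hfb i).trans_le (hlubb.1 ⟨i+1, rfl⟩)⟩ le_rfl)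
    · rw [ENNReal.iSup_add]
      refine iSup_le fun w₁ => ?_
      rw [ENNReal.add_iSup]
      refine iSup_le fun w₂ => ?_
      refine le_trans (le_of_eq (hPadd w₁.1 w₂.1).symm)
        (le_iSup_of_le ⟨w₁.1 + w₂.1, hCu.O3 w₁.2 w₂.2⟩ le_rfl)
  · intro f s hmono hlub
    refine le_antisymm (iSup_le fun w => ?_) (iSup_le fun n => iSup_le fun w =>
      le_iSup_of_le ⟨w.1, w.2.trans_le (hlub.1 ⟨n, rfl⟩)⟩ le_rfl)
    obtain ⟨u, hwu, hus⟩ := wayBelow_interpolate hCu w.2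
    obtain ⟨n, hn⟩ := hus f s hmono hlub le_rfl
    have hstep : P.f w.1 ≤ ⨆ v : {v : S // WayBelow v (f n)}, P.f v.1 :=
      le_iSup_of_le ⟨w.1, hwu.trans_le hn⟩ le_rfl
    exact le_trans hstep (le_iSup (fun n => ⨆ v : {v : S // WayBelow v (f n)}, P.f v.1) n)
  · refine iSup_le fun w => ?_
    calc P.f w.1 ≤ P.f y := P.mono w.2.le
    _ = 1 := hPy
  · intro X hX
    exact le_trans hPx' (le_iSup_of_le ⟨x', hX⟩ le_rfl)

end MainFunctional


section PartA

variable {S : Type*} [AddCommMonoid S] [PartialOrder S] (hCu : IsCuSemigroup S)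
include hCu

theorem partA (hunp : ∀ x y : S, (∃ n : ℕ, (n + 1) • x ≤ n • y) → x ≤ y)
    {γ : ℝ≥0∞} (hγ1 : γ < 1) (x y : S)
    (hfun : ∀ l : S → ℝ≥0∞, IsFunctional l → l x ≤ γ * l y) : x ≤ y := by
  classical
  obtain ⟨fx, hfx, hlubx⟩ := hCu.O2 x
  refine hlubx.2 ?_
  rintro _ ⟨k, rfl⟩
  set x' := fx k with hx'
  have hwb : WayBelow x' x := (hfx k).trans_le (hlubx.1 ⟨k+1, rfl⟩)
  have hIy : x ∈ sIdeal y := by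
    have hind := indicator_functional hCu y
    have hthis := hfun _ hind
    have hy : (if y ∈ sIdeal y then (0:ℝ≥0∞) else ⊤) = 0 := by
      have hmem : y ∈ sIdeal y := fun w hw => ⟨1, by simpa using hw.le⟩
      simp [hmem]
    rw [hy, mul_zero, le_zero_iff] at hthis
    by_contra h
    simp only [h, if_false] at hthis
    exact ENNReal.top_ne_zero hthis
  obtain ⟨K₀, hK₀⟩ := hIy x' hwb
  by_cases hx'0 : x' ≤ 0
  · exact hx'0.trans (hCu.zero_le y)
  by_cases hex : ∃ m : ℕ, 1 ≤ m ∧ (m+1) • x' ≤ m • y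
  · obtain ⟨m, _, hm⟩ := hex
    exact (hunp x' y ⟨m, hm⟩)
  push_neg at hex
  exfalso
  obtain ⟨l, hl, hly, hlx⟩ := exists_good_functional hCu hK₀ (fun m hm => hex m hm) hx'0
  have h1 : (1:ℝ≥0∞) ≤ l x := hlx x hwb
  have h2 : l x ≤ γ * l y := hfun l hl
  have h3 : γ * l y ≤ γ := by
    calc γ * l y ≤ γ * 1 := mul_le_mul_right hly γ
    _ = γ := mul_one γ
  exact absurd (h1.trans (h2.trans h3)) (not_le.mpr hγ1)

end PartA


/-- For an almost divisible Cu-semigroup with (O5): almost unperforation is equivalent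
to LBCA for every scale, and to LBCA for some scale. -/
theorem stmt_6 {S : Type*} [AddCommMonoid S] [PartialOrder S]
    (hCu : IsCuSemigroup S) (hO5 : SatisfiesO5 S)
    (hdiv : ∀ x' x : S, WayBelow x' x → ∀ n : ℕ, ∃ y : S, n • y ≤ x ∧ x' ≤ (n + 1) • y) :
    ((∀ x y : S, (∃ n : ℕ, (n + 1) • x ≤ n • y) → x ≤ y) ↔
      (∀ Sg : Set S, IsScale Sg → HasLBCA Sg)) ∧
    ((∀ x y : S, (∃ n : ℕ, (n + 1) • x ≤ n • y) → x ≤ y) ↔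
      (∃ Sg : Set S, IsScale Sg ∧ HasLBCA Sg)) := by
  have hA : (∀ x y : S, (∃ n : ℕ, (n + 1) • x ≤ n • y) → x ≤ y) →
      ∀ Sg : Set S, IsScale Sg → HasLBCA Sg := by
    intro hunp Sg hSg γ hγ0 hγ1 d
    refine ⟨0, fun x y _ _ hfun n _ => ?_⟩
    exact nsmul_le_nsmul_base hCu (partA hCu hunp hγ1 x y hfun) n
  have hscale_univ : IsScale (Set.univ : Set S) :=
    { hered := fun _ _ _ _ => trivial
      supClosed := fun _ _ _ _ _ => trivial
      generates := fun x' x h => ⟨[x], by simp, by simpa using h.le⟩ }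
  have hC : ∀ Sg : Set S, IsScale Sg → HasLBCA Sg →
      ∀ x y : S, (∃ n : ℕ, (n + 1) • x ≤ n • y) → x ≤ y :=
    fun Sg hSg hL x y h => partC hCu hdiv hSg hL x y h
  constructor
  · constructor
    · exact hA
    · intro h
      exact hC _ hscale_univ (h _ hscale_univ)
  · constructor
    · intro h
      exact ⟨Set.univ, hscale_univ, hA h _ hscale_univ⟩
    · rintro ⟨Sg, hSg, hL⟩
      exact hC Sg hSg hL
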